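/- Let G = K_{n_1,...,n_c} be a complete c-partite graph with c ≥ 2 and n_1 ≥ ... ≥ n_c ≥ 1, let n = n_1 + ... + n_c, suppose G is balanced, i.e. floor((n+c)/2) ≤ n - n_1 + 1, let t = floor((n+c)/2) + 1, and suppose the average colour-class size n/c is at least 3. Then the total number of cliques in G, which equals (n_1+1)(n_2+1)···(n_c+1), is at most 2^{t-2} · (n - t + 3). -/

import Mathlib

/-- The total number of cliques of `G` (including the empty clique). -/
noncomputable def SimpleGraph.totalCliqueCount {V : Type*} (G : SimpleGraph V) : ℕ :=
  {s : Finset V | G.IsClique (s : Set V)}.ncard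

private lemma aux_perpart (a : ℕ) (ha : 2 ≤ a) :
    a ^ 2 * 9 ^ (a - 4) * 8 ^ (4 - a) ≤ 2 ^ a * 8 ^ (a - 4) * 9 ^ (4 - a) := by
  rcases le_or_gt a 5 with h | h
  · interval_cases a <;> norm_num
  · clear ha
    replace h : 5 ≤ a := by omega
    induction a, h using Nat.le_induction with
    | base => norm_num
    | succ a ha ih =>
      have h4 : a - 4 + 1 = a + 1 - 4 := by omega
      have h0 : 4 - a = 0 := by omega
      have h0' : 4 - (a + 1) = 0 := by omega
      simp only [h0, pow_zero, mul_one] at ih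
      simp only [h0', pow_zero, mul_one, ← h4]
      have key : (a + 1) ^ 2 * 9 ≤ a ^ 2 * 16 := by nlinarith
      calc (a + 1) ^ 2 * 9 ^ (a - 4 + 1) = (a + 1) ^ 2 * 9 * 9 ^ (a - 4) := by ring
        _ ≤ a ^ 2 * 16 * 9 ^ (a - 4) := Nat.mul_le_mul_right _ key
        _ = (a ^ 2 * 9 ^ (a - 4)) * 16 := by ring
        _ ≤ (2 ^ a * 8 ^ (a - 4)) * 16 := Nat.mul_le_mul_right _ ih
        _ = 2 ^ (a + 1) * 8 ^ (a - 4 + 1) := by rw [pow_succ, pow_succ]; ring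

private lemma aux_pow89 (P Q : ℕ) (hQP : Q ≤ P) : 8 ^ P * 9 ^ Q ≤ 9 ^ P * 8 ^ Q := by
  obtain ⟨d, rfl⟩ := Nat.exists_eq_add_of_le hQP
  rw [pow_add, pow_add]
  calc 8 ^ Q * 8 ^ d * 9 ^ Q = (8 ^ Q * 9 ^ Q) * 8 ^ d := by ring
    _ ≤ (8 ^ Q * 9 ^ Q) * 9 ^ d := Nat.mul_le_mul_left _ (Nat.pow_le_pow_left (by norm_num) d)
    _ = 9 ^ Q * 9 ^ d * 8 ^ Q := by ring

private lemma aux_prod_sq_le (c : ℕ) (a : Fin c → ℕ) (h2 : ∀ i, 2 ≤ a i)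
    (hsum : 4 * c ≤ ∑ i, a i) : (∏ i, a i) ^ 2 ≤ 2 ^ (∑ i, a i) := by
  set m := ∑ i, a i with hm
  set P := ∑ i, (a i - 4) with hP
  set Q := ∑ i, (4 - a i) with hQ
  have hQP : Q ≤ P := by
    have h : Q + m = 4 * c + P := by
      calc Q + m = ∑ x, (4 - a x + a x) := (Finset.sum_add_distrib).symm
        _ = ∑ x : Fin c, (4 + (a x - 4)) := Finset.sum_congr rfl (fun x _ => by
            have := h2 x; omega)
        _ = 4 * c + P := by
            rw [Finset.sum_add_distrib, Finset.sum_const]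
            simp [mul_comm]
            exact hP.symm
    omega
  have key : (∏ i, a i) ^ 2 * 9 ^ P * 8 ^ Q ≤ 2 ^ m * 8 ^ P * 9 ^ Q := by
    calc (∏ i, a i) ^ 2 * 9 ^ P * 8 ^ Q
        = ∏ i, (a i ^ 2 * 9 ^ (a i - 4) * 8 ^ (4 - a i)) := by
          simp [Finset.prod_mul_distrib, Finset.prod_pow, Finset.prod_pow_eq_pow_sum]
          rfl
      _ ≤ ∏ i, (2 ^ a i * 8 ^ (a i - 4) * 9 ^ (4 - a i)) :=
          Finset.prod_le_prod (fun i _ => Nat.zero_le _) (fun i _ => aux_perpart (a i) (h2 i))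
      _ = 2 ^ m * 8 ^ P * 9 ^ Q := by
          simp [Finset.prod_mul_distrib, Finset.prod_pow_eq_pow_sum]
          rfl
  have key2 : (∏ i, a i) ^ 2 * 9 ^ P * 8 ^ Q ≤ 2 ^ m * 9 ^ P * 8 ^ Q := by
    refine key.trans ?_
    calc 2 ^ m * 8 ^ P * 9 ^ Q = 2 ^ m * (8 ^ P * 9 ^ Q) := by ring
      _ ≤ 2 ^ m * (9 ^ P * 8 ^ Q) := Nat.mul_le_mul_left _ (aux_pow89 P Q hQP)
      _ = 2 ^ m * 9 ^ P * 8 ^ Q := by ring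
  have h8 : 0 < 8 ^ Q := Nat.pow_pos (by norm_num)
  have h9 : 0 < 9 ^ P := Nat.pow_pos (by norm_num)
  exact Nat.le_of_mul_le_mul_right (Nat.le_of_mul_le_mul_right key2 h8) h9

private lemma aux_clique_ncard {ι : Type*} [Fintype ι] (V : ι → Type*) [∀ i, Fintype (V i)] :
    (SimpleGraph.completeMultipartiteGraph V).totalCliqueCount
      = ∏ i, (Fintype.card (V i) + 1) := by
  classical
  set F : (∀ i, Option (V i)) → Finset (Σ i, V i) :=
    fun g => Finset.univ.filter (fun v => g v.1 = some v.2) with hF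
  have hmem : ∀ (g : ∀ i, Option (V i)) (v : Σ i, V i), v ∈ F g ↔ g v.1 = some v.2 := by
    intro g v; simp [hF]
  have hinj : Function.Injective F := by
    intro g g' hgg
    funext i
    cases hg : g i with
    | some x =>
      have : (⟨i, x⟩ : Σ i, V i) ∈ F g := (hmem g _).2 hg
      rw [hgg] at this
      exact ((hmem g' _).1 this).symm
    | none =>
      cases hg' : g' i with
      | some y =>
        have : (⟨i, y⟩ : Σ i, V i) ∈ F g' := (hmem g' _).2 hg'
        rw [← hgg] at this
        have := (hmem g _).1 this
        rw [hg] at this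
        exact absurd this (by simp)
      | none => rfl
  have hrange : {s : Finset (Σ i, V i) |
      (SimpleGraph.completeMultipartiteGraph V).IsClique (s : Set (Σ i, V i))} = Set.range F := by
    ext s
    constructor
    · intro hs
      have huniq : ∀ (i : ι) (x y : V i), (⟨i, x⟩ : Σ i, V i) ∈ s → ⟨i, y⟩ ∈ s → x = y := by
        intro i x y hx hy
        by_contra hxy
        have hne : (⟨i, x⟩ : Σ i, V i) ≠ ⟨i, y⟩ := by simp [hxy]
        have := hs (by simpa using hx) (by simpa using hy) hne
        simp [SimpleGraph.completeMultipartiteGraph] at this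
      refine ⟨fun i => if h : ∃ x : V i, (⟨i, x⟩ : Σ i, V i) ∈ s then some h.choose else none, ?_⟩
      ext v
      obtain ⟨i, x⟩ := v
      simp only [hF, Finset.mem_filter, Finset.mem_univ, true_and]
      constructor
      · intro h
        split at h
        · next hex =>
          have hx : x = hex.choose := by simpa using h.symm
          rw [hx]; exact hex.choose_spec
        · simp at h
      · intro h
        have hex : ∃ z : V i, (⟨i, z⟩ : Σ i, V i) ∈ s := ⟨x, h⟩
        simp only [dif_pos hex]
        rw [huniq i hex.choose x hex.choose_spec h]
    · rintro ⟨g, rfl⟩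
      intro v hv w hw hne
      have hv' := (hmem g v).1 (by simpa using hv)
      have hw' := (hmem g w).1 (by simpa using hw)
      simp only [SimpleGraph.completeMultipartiteGraph, SimpleGraph.comap_adj,
        SimpleGraph.top_adj]
      intro h1
      apply hne
      obtain ⟨i, x⟩ := v
      obtain ⟨j, y⟩ := w
      cases h1
      rw [hv'] at hw'
      simpa using hw'
  rw [SimpleGraph.totalCliqueCount, hrange, ← Nat.card_coe_set_eq,
    Nat.card_range_of_injective hinj, Nat.card_eq_fintype_card, Fintype.card_pi]
  simp [Fintype.card_option]

/-- A balanced complete multipartite graph `K_{n₁,…,n_c}` (with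
`⌊(n+c)/2⌋ ≤ n - n₁ + 1` and `t = ⌊(n+c)/2⌋ + 1`) whose average colour-class size `n/c`
is at least 3 has at most `2^(t-2) * (n - t + 3)` cliques in total; its total number of
cliques equals `∏ i, (nᵢ + 1)`. -/
theorem totalCliqueCount_balanced_completeMultipartite (c : ℕ) (hc : 2 ≤ c)
    (f : Fin c → ℕ) (hf : Antitone f) (hpos : ∀ i, 1 ≤ f i)
    (n : ℕ) (hn : n = ∑ i, f i)
    (hbal : (n + c) / 2 ≤ n - f ⟨0, by omega⟩ + 1)
    (t : ℕ) (ht : t = (n + c) / 2 + 1)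
    (havg : (3 : ℚ) ≤ (n : ℚ) / (c : ℚ)) :
    (SimpleGraph.completeMultipartiteGraph fun i => Fin (f i)).totalCliqueCount =
      ∏ i, (f i + 1) ∧
    ∏ i, (f i + 1) ≤ 2 ^ (t - 2) * (n + 3 - t) := by
  have hcount : (SimpleGraph.completeMultipartiteGraph fun i => Fin (f i)).totalCliqueCount =
      ∏ i, (f i + 1) := by
    rw [aux_clique_ncard]
    simp
  refine ⟨hcount, ?_⟩
  -- derive 3c ≤ n from the average condition
  have hc0 : (0 : ℚ) < (c : ℚ) := by positivity
  rw [le_div_iff₀ hc0] at havg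
  have hn3c : 3 * c ≤ n := by exact_mod_cast havg
  -- the sum of (f i + 1)
  have hsum : ∑ i, (f i + 1) = n + c := by
    rw [Finset.sum_add_distrib, ← hn]
    simp
  have hsq : (∏ i, (f i + 1)) ^ 2 ≤ 2 ^ (n + c) := by
    have h4c : 4 * c ≤ ∑ i, (f i + 1) := by
      calc 4 * c ≤ n + c := by omega
        _ = ∑ i, (f i + 1) := hsum.symm
    have := aux_prod_sq_le c (fun i => f i + 1) (fun i => by show 2 ≤ f i + 1; have := hpos i; omega) h4c
    rwa [hsum] at this
  set q := (n + c) / 2 with hq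
  have hq1 : 2 * q ≤ n + c := by omega
  have hq2 : n + c ≤ 2 * q + 1 := by omega
  have e1 : t - 2 = q - 1 := by omega
  have e2 : n + 3 - t = n + 2 - q := by omega
  have h4 : 4 ≤ n + 2 - q := by omega
  rw [e1, e2]
  have hpow : 2 ^ (n + c) ≤ (2 ^ (q - 1)) ^ 2 * 8 := by
    have hle : n + c ≤ 2 * (q - 1) + 3 := by omega
    calc 2 ^ (n + c) ≤ 2 ^ (2 * (q - 1) + 3) := Nat.pow_le_pow_right (by norm_num) hle
      _ = (2 ^ (q - 1)) ^ 2 * 8 := by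
        rw [pow_add, mul_comm 2 (q - 1), pow_mul]
        norm_num
  have hR : (2 ^ (q - 1)) ^ 2 * 8 ≤ (2 ^ (q - 1) * (n + 2 - q)) ^ 2 := by
    rw [mul_pow]
    have h8 : (8 : ℕ) ≤ (n + 2 - q) ^ 2 := by nlinarith [h4]
    exact Nat.mul_le_mul_left _ h8
  have hfin : (∏ i, (f i + 1)) ^ 2 ≤ (2 ^ (q - 1) * (n + 2 - q)) ^ 2 :=
    hsq.trans (hpow.trans hR)
  exact le_of_pow_le_pow_left₀ (by norm_num) (Nat.zero_le _) hfin
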